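/- Let E be a directed graph and (F, M) a Drinen–Tomforde desingularisation of E. Then the map φ : E⁰F*E⁰ → E*, defined on paths β = b¹…bⁿ (each bᵏ ∈ (F¹ ∩ E¹) ∪ F*(M)) by φ(β) = φ′(b¹)…φ′(bⁿ), where φ′ is the identity on F¹ ∩ E¹ and sends ν ∈ F*(M) to e_ν, is a bijection preserving range and source. -/

import Mathlib

structure DirectedGraph where
  V : Type
  E : Type
  r : E → V
  s : E → V

namespace DirectedGraph

variable {G : DirectedGraph}

/-- A finite path: a list of edges `μ₁ … μₙ` with `s μᵢ = r μᵢ₊₁`, together with its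
range vertex (which is the range of the first edge when the path is nonempty, and is
the defining datum of the path when the path has length zero, i.e. is a vertex). -/
structure FinPath (G : DirectedGraph) where
  vtx : G.V
  edges : List G.E
  chain : edges.Chain' fun e f => G.s e = G.r f
  hv : ∀ e ∈ edges.head?, G.r e = vtx

/-- An infinite path `μ₁μ₂…` with `s μᵢ = r μᵢ₊₁`. -/
structure InfPath (G : DirectedGraph) where
  edge : ℕ → G.E
  chain : ∀ n, G.s (edge n) = G.r (edge (n + 1))

/-- The path space `E* ∪ E^∞`. -/
abbrev PathSpace (G : DirectedGraph) := FinPath G ⊕ InfPath G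

namespace FinPath

def length (μ : FinPath G) : ℕ := μ.edges.length

def range (μ : FinPath G) : G.V := μ.vtx

def source (μ : FinPath G) : G.V := (μ.edges.getLast?).elim μ.vtx G.s

/-- A vertex, regarded as a path of length zero. -/
def ofVertex (G : DirectedGraph) (v : G.V) : FinPath G :=
  ⟨v, [], List.IsChain.nil, by simp⟩

/-- `μ.Extends ν` means `μ = νν′` for some path `ν′`. -/
def Extends (μ ν : FinPath G) : Prop := μ.vtx = ν.vtx ∧ ν.edges <+: μ.edges

end FinPath

def InfPath.range (x : InfPath G) : G.V := G.r (x.edge 0)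

/-- `x.Extends ν` means the infinite path `x` is of the form `νx′`. -/
def InfPath.Extends (x : InfPath G) (ν : FinPath G) : Prop :=
  (ν.edges = [] → x.range = ν.vtx) ∧
  ∀ i, (h : i < ν.edges.length) → x.edge i = ν.edges.get ⟨i, h⟩

/-- The cylinder set `Z(μ) = {w ∈ E* ∪ E^∞ : w = μw′}`. -/
def Cyl (μ : FinPath G) : Set (PathSpace G) :=
  {w | match w with
       | Sum.inl lam => lam.Extends μ
       | Sum.inr x => x.Extends μ}

/-- The cylinder set `Z(μe)` of the path `μ` followed by the edge `e`. -/
def CylSnoc (μ : FinPath G) (e : G.E) : Set (PathSpace G) :=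
  {w | match w with
       | Sum.inl lam => (μ.edges ++ [e]) <+: lam.edges
       | Sum.inr x => ∀ i, (h : i < (μ.edges ++ [e]).length) →
           x.edge i = (μ.edges ++ [e]).get ⟨i, h⟩}

/-- `Z(μ∖G) := Z(μ) ∖ ⋃_{e ∈ G} Z(μe)`. -/
def CylMinus (μ : FinPath G) (GS : Finset G.E) : Set (PathSpace G) :=
  Cyl μ \ ⋃ e ∈ GS, CylSnoc μ e

/-- The basic sets `Z(μ∖G)` for `μ ∈ E*` and `G ⊆ s(μ)E¹` finite. -/
def basicSets (G : DirectedGraph) : Set (Set (PathSpace G)) :=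
  {S | ∃ (μ : FinPath G) (GS : Finset G.E),
        (∀ e ∈ GS, G.r e = μ.source) ∧ S = CylMinus μ GS}

end DirectedGraph
namespace DirectedGraph

variable {G : DirectedGraph}

/-- (C1) an infinite path has no exits: any edge sharing a source with an edge of the
path is that edge. -/
def HasNoExits (mu : InfPath G) : Prop :=
  ∀ (e : G.E) (i : ℕ), G.s e = G.s (mu.edge i) → e = mu.edge i

/-- The entries of an infinite path: edges into a vertex of the path other than the
edges of the path itself. -/
def entries (mu : InfPath G) : Set G.E :=
  {e | ∃ i, G.r e = G.r (mu.edge i) ∧ e ≠ mu.edge i}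

/-- A collapsible infinite path: (C1) no exits, (C2) each vertex on it receives finitely
many edges, (C3) its range receives only its first edge, (C4) its edges are distinct,
(C5) it has zero or infinitely many entries. -/
def Collapsible (mu : InfPath G) : Prop :=
  HasNoExits mu ∧
  (∀ i, (G.r ⁻¹' {G.r (mu.edge i)}).Finite) ∧
  (G.r ⁻¹' {mu.range} = {mu.edge 0}) ∧
  Function.Injective mu.edge ∧
  (entries mu = ∅ ∨ (entries mu).Infinite)

/-- F*(mu): finite paths nu with |nu| > 1 of the form mu₁…mu_{|nu|-1}e with
e ≠ mu_{|nu|}. -/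
def CollCand (mu : InfPath G) : Set (FinPath G) :=
  {nu | 1 < nu.edges.length ∧
        (∀ i, i + 1 < nu.edges.length → nu.edges[i]? = some (mu.edge i)) ∧
        nu.edges[nu.edges.length - 1]? ≠ some (mu.edge (nu.edges.length - 1))}

/-- s_∞(M): the sources of the edges of the paths in M. -/
def sInfSet (M : Set (InfPath G)) : Set G.V :=
  {v | ∃ mu ∈ M, ∃ i, v = G.s (mu.edge i)}

/-- The edges of the graph kept (unchanged) when collapsing the paths in M:
F¹ ∖ (r⁻¹(s_∞(M)) ∪ {first edges of paths in M}). -/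
def Kept (M : Set (InfPath G)) : Set G.E :=
  {e | G.r e ∉ sInfSet M ∧ ∀ mu ∈ M, e ≠ mu.edge 0}

/-- The paths in M are pairwise disjoint: distinct paths share no edges and no
vertices. -/
def DisjointPaths (M : Set (InfPath G)) : Prop :=
  ∀ mu ∈ M, ∀ nu ∈ M, mu ≠ nu →
    (∀ i j, mu.edge i ≠ nu.edge j) ∧ (∀ i j, G.r (mu.edge i) ≠ G.r (nu.edge j))

/-- The graph obtained by collapsing the paths in M: vertices are those not of the form
s(muᵢ); edges are the kept edges together with an edge e_nu for each nu ∈ F*(mu),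
mu ∈ M.  (The subtype conditions on sources and ranges hold automatically when the
paths of M are disjoint and collapsible.) -/
def Collapsed (G : DirectedGraph) (M : Set (InfPath G)) : DirectedGraph where
  V := {v : G.V // v ∉ sInfSet M}
  E := {e : G.E // e ∈ Kept M ∧ G.s e ∉ sInfSet M} ⊕
       {p : InfPath G × FinPath G // p.1 ∈ M ∧ p.2 ∈ CollCand p.1 ∧
          p.2.vtx ∉ sInfSet M ∧ p.2.source ∉ sInfSet M}
  r := fun x => match x with
    | Sum.inl e => ⟨G.r e.1, e.2.1.1⟩
    | Sum.inr p => ⟨p.1.2.vtx, p.2.2.2.1⟩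
  s := fun x => match x with
    | Sum.inl e => ⟨G.s e.1, e.2.2⟩
    | Sum.inr p => ⟨p.1.2.source, p.2.2.2.2⟩

/-- The vertex of the collapsed graph, as a vertex of the original graph. -/
def collV (M : Set (InfPath G)) (v : (Collapsed G M).V) : G.V := v.1

/-- The list of edges of the original graph underlying an edge of the collapsed
graph. -/
def segEdges (M : Set (InfPath G)) : (Collapsed G M).E → List G.E
  | Sum.inl e => [e.1]
  | Sum.inr p => p.1.2.edges

/-- A finite list of edges is an initial segment of an infinite path. -/
def IsPrefixOfInf (l : List G.E) (x : InfPath G) : Prop :=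
  ∀ i, (h : i < l.length) → x.edge i = l.get ⟨i, h⟩

end DirectedGraph

namespace DirectedGraph

section Desing

variable {F : DirectedGraph} {M : Set (InfPath F)}

theorem FinPath.ext' {G : DirectedGraph} {μ ν : FinPath G}
    (h1 : μ.vtx = ν.vtx) (h2 : μ.edges = ν.edges) : μ = ν := by
  cases μ; cases ν; cases h1; cases h2; rfl

lemma source_eq_of_getLast {G : DirectedGraph} {nu : FinPath G} {e : G.E}
    (h : nu.edges.getLast? = some e) : nu.source = G.s e := by
  simp [FinPath.source, h]

lemma source_eq_vtx {G : DirectedGraph} {nu : FinPath G} (h : nu.edges = []) :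
    nu.source = nu.vtx := by
  simp [FinPath.source, h]

lemma r_edge_succ (mu : InfPath F) (i : ℕ) :
    F.r (mu.edge (i + 1)) = F.s (mu.edge i) := (mu.chain i).symm

lemma s_mem_sInf {mu : InfPath F} (hmu : mu ∈ M) (i : ℕ) :
    F.s (mu.edge i) ∈ sInfSet M := ⟨mu, hmu, i, rfl⟩

lemma kept_not_edge {e : F.E} (hk : e ∈ Kept M) {mu : InfPath F} (hmu : mu ∈ M)
    (i : ℕ) : e ≠ mu.edge i := by
  cases i with
  | zero => exact hk.2 mu hmu
  | succ i =>
    intro h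
    apply hk.1
    rw [h, r_edge_succ]
    exact s_mem_sInf hmu i

lemma kept_source (hM : ∀ mu ∈ M, Collapsible mu) {e : F.E} (hk : e ∈ Kept M) :
    F.s e ∉ sInfSet M := by
  rintro ⟨mu, hmu, i, h⟩
  exact kept_not_edge hk hmu i ((hM mu hmu).1 e i h)

lemma edge_det (hdisj : DisjointPaths M) {mu nu : InfPath F} (hmu : mu ∈ M)
    (hnu : nu ∈ M) {i j : ℕ} (h : mu.edge i = nu.edge j) : mu = nu := by
  by_contra hne
  exact (hdisj mu hmu nu hnu hne).1 i j h

lemma range_inj {mu : InfPath F} (hc : Collapsible mu) :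
    ∀ {i j : ℕ}, F.r (mu.edge i) = F.r (mu.edge j) → i = j := by
  obtain ⟨C1, -, C3, C4, -⟩ := hc
  have key : ∀ j : ℕ, F.r (mu.edge 0) = F.r (mu.edge (j + 1)) → False := by
    intro j h
    have h2 : mu.edge (j + 1) ∈ F.r ⁻¹' {mu.range} := by
      simp only [Set.mem_preimage, Set.mem_singleton_iff]
      rw [← h]; rfl
    rw [C3] at h2
    exact Nat.succ_ne_zero j (C4 h2)
  intro i j h
  match i, j with
  | 0, 0 => rfl
  | 0, j + 1 => exact absurd h (fun hh => key j hh)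
  | i + 1, 0 => exact absurd h.symm (fun hh => key i hh)
  | i + 1, j + 1 =>
    have h' : F.s (mu.edge i) = F.s (mu.edge j) := by
      rw [mu.chain i, mu.chain j, h]
    exact congrArg (· + 1) (C4 (C1 (mu.edge i) j h'))

/-- The first original edge of a collapsed edge. -/
def firstE : (Collapsed F M).E → F.E
  | Sum.inl e => e.1
  | Sum.inr p => p.1.1.edge 0

lemma segEdges_ne_nil : ∀ g : (Collapsed F M).E, segEdges M g ≠ []
  | Sum.inl _ => by simp [segEdges]
  | Sum.inr p => by
    have h1 : 1 < p.1.2.edges.length := p.2.2.1.1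
    show p.1.2.edges ≠ []
    intro h
    rw [h] at h1
    simp at h1

lemma seg_head? : ∀ g : (Collapsed F M).E, (segEdges M g).head? = some (firstE g)
  | Sum.inl _ => rfl
  | Sum.inr p => by
    have h1 : 1 < p.1.2.edges.length := p.2.2.1.1
    have h0 := p.2.2.1.2.1 0 (by omega)
    show p.1.2.edges.head? = _
    rw [List.head?_eq_getElem?, h0]
    rfl

lemma seg_chain (g : (Collapsed F M).E) :
    (segEdges M g).Chain' fun e f => F.s e = F.r f := by
  cases g with
  | inl e => exact List.isChain_singleton _
  | inr p => exact p.1.2.chain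

lemma head_segEdges (g : (Collapsed F M).E) :
    ∀ e ∈ (segEdges M g).head?, F.r e = ((Collapsed F M).r g).1 := by
  cases g with
  | inl e' =>
    intro e he
    have he' : e'.1 = e := by simpa [segEdges] using he
    subst he'
    rfl
  | inr p => exact fun e he => p.1.2.hv e he

lemma last_segEdges (g : (Collapsed F M).E) :
    ∀ e ∈ (segEdges M g).getLast?, F.s e = ((Collapsed F M).s g).1 := by
  cases g with
  | inl e' =>
    intro e he
    have he' : e'.1 = e := by simpa [segEdges] using he
    subst he'
    rfl
  | inr p =>
    intro e he
    exact (source_eq_of_getLast (Option.mem_def.mp he)).symm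

lemma chain'_flatMap : ∀ {l : List (Collapsed F M).E},
    l.Chain' (fun g g' => (Collapsed F M).s g = (Collapsed F M).r g') →
    (l.flatMap (segEdges M)).Chain' fun e f => F.s e = F.r f := by
  intro l
  induction l with
  | nil => intro _; exact List.isChain_nil
  | cons g l ih =>
    intro h
    replace h := List.isChain_cons.mp h
    rw [List.flatMap_cons]
    apply (seg_chain g).append (ih h.2)
    intro x hx y hy
    cases l with
    | nil => simp at hy
    | cons g' l' =>
      rw [List.flatMap_cons, List.head?_append, seg_head? g'] at hy
      have hy' : firstE g' = y := by simpa using hy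
      subst hy'
      have h1 := last_segEdges g x hx
      have h2 := head_segEdges g' (firstE g') (by rw [seg_head?]; rfl)
      rw [h1, h2]
      exact congrArg Subtype.val (h.1 g' rfl)

lemma flatMap_head? (g : (Collapsed F M).E) (l : List (Collapsed F M).E) :
    ((g :: l).flatMap (segEdges M)).head? = some (firstE g) := by
  rw [List.flatMap_cons, List.head?_append, seg_head?]
  rfl

lemma flatMap_getLast? : ∀ (l : List (Collapsed F M).E) (g : (Collapsed F M).E),
    ((l ++ [g]).flatMap (segEdges M)).getLast? = (segEdges M g).getLast?
  | [], g => by simp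
  | g' :: l, g => by
    rw [List.cons_append, List.flatMap_cons, List.getLast?_append,
      flatMap_getLast? l g]
    obtain ⟨x, hx⟩ : ∃ x, (segEdges M g).getLast? = some x :=
      ⟨_, List.getLast?_eq_getLast (segEdges_ne_nil g)⟩
    rw [hx]
    rfl

/-- The concatenation map from paths in the collapsed graph to paths in `F`. -/
def psiF (gam : FinPath (Collapsed F M)) : FinPath F where
  vtx := gam.vtx.1
  edges := gam.edges.flatMap (segEdges M)
  chain := chain'_flatMap gam.chain
  hv := by
    intro e he
    cases hl : gam.edges with
    | nil => rw [hl] at he; simp at he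
    | cons g l =>
      rw [hl, flatMap_head?] at he
      have he' : firstE g = e := Option.mem_some_iff.mp he
      subst he'
      have h2 := head_segEdges (M := M) g (firstE g) (by rw [seg_head?]; rfl)
      rw [h2]
      exact congrArg Subtype.val (gam.hv g (by rw [hl]; rfl))

@[simp] lemma psiF_vtx (gam : FinPath (Collapsed F M)) :
    (psiF gam).vtx = gam.vtx.1 := rfl

@[simp] lemma psiF_edges (gam : FinPath (Collapsed F M)) :
    (psiF gam).edges = gam.edges.flatMap (segEdges M) := rfl

lemma psiF_source (gam : FinPath (Collapsed F M)) :
    (psiF gam).source = (gam.source).1 := by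
  rcases List.eq_nil_or_concat gam.edges with h | ⟨l, g, h⟩
  · have h2 : (psiF gam).edges = [] := by rw [psiF_edges, h]; rfl
    rw [source_eq_vtx h2, source_eq_vtx h]
    rfl
  · obtain ⟨x, hx⟩ : ∃ x, (segEdges M g).getLast? = some x :=
      ⟨_, List.getLast?_eq_getLast (segEdges_ne_nil g)⟩
    have h1 : (psiF gam).edges.getLast? = some x := by
      rw [psiF_edges, h, List.concat_eq_append, flatMap_getLast?, hx]
    have h2 : gam.edges.getLast? = some g := by
      rw [h, List.concat_eq_append, List.getLast?_append]
      simp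
    rw [source_eq_of_getLast h1, source_eq_of_getLast h2]
    exact last_segEdges g x (by rw [hx]; rfl)

lemma break_not_lt {mu : InfPath F} {nu1 nu2 : FinPath F} {t1 t2 : List F.E}
    (h1 : nu1 ∈ CollCand mu) (h2 : nu2 ∈ CollCand mu)
    (h : nu1.edges ++ t1 = nu2.edges ++ t2) :
    ¬ nu1.edges.length < nu2.edges.length := by
  intro hlt
  have hk1 : 1 < nu1.edges.length := h1.1
  have e1 : (nu1.edges ++ t1)[nu1.edges.length - 1]? = nu1.edges[nu1.edges.length - 1]? :=
    List.getElem?_append_left (by omega)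
  have e2 : (nu2.edges ++ t2)[nu1.edges.length - 1]? = nu2.edges[nu1.edges.length - 1]? :=
    List.getElem?_append_left (by omega)
  have e3 := h2.2.1 (nu1.edges.length - 1) (by omega)
  have e4 := h1.2.2
  rw [h, e2, e3] at e1
  exact e4 e1.symm

lemma seg_cancel (hdisj : DisjointPaths M)
    {g1 g2 : (Collapsed F M).E} {t1 t2 : List F.E}
    (h : segEdges M g1 ++ t1 = segEdges M g2 ++ t2) : g1 = g2 := by
  have hhead : firstE g1 = firstE g2 := by
    have hh := congrArg List.head? h
    rw [List.head?_append, List.head?_append, seg_head?, seg_head?] at hh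
    simpa using hh
  cases g1 with
  | inl e1 =>
    cases g2 with
    | inl e2 => exact congrArg Sum.inl (Subtype.ext hhead)
    | inr p2 => exact absurd hhead (kept_not_edge e1.2.1 p2.2.1 0)
  | inr p1 =>
    cases g2 with
    | inl e2 => exact absurd hhead.symm (kept_not_edge e2.2.1 p1.2.1 0)
    | inr p2 =>
      have hmu : p1.1.1 = p2.1.1 := edge_det hdisj p1.2.1 p2.2.1 hhead
      have hc1 : p1.1.2 ∈ CollCand p2.1.1 := by rw [← hmu]; exact p1.2.2.1
      have hc2 : p2.1.2 ∈ CollCand p2.1.1 := p2.2.2.1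
      have h' : p1.1.2.edges ++ t1 = p2.1.2.edges ++ t2 := h
      have hlen : p1.1.2.edges.length = p2.1.2.edges.length :=
        le_antisymm (not_lt.mp (break_not_lt hc2 hc1 h'.symm))
          (not_lt.mp (break_not_lt hc1 hc2 h'))
      have hedges : p1.1.2.edges = p2.1.2.edges := by
        have t1' : p1.1.2.edges = (p1.1.2.edges ++ t1).take p1.1.2.edges.length :=
          List.take_left.symm
        rw [t1', h', hlen, List.take_left]
      have hne : p1.1.2.edges ≠ [] := by
        intro hh
        have hlen1 : 1 < p1.1.2.edges.length := hc1.1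
        rw [hh] at hlen1
        simp at hlen1
      obtain ⟨x, hx⟩ : ∃ x, p1.1.2.edges.head? = some x := by
        cases hE : p1.1.2.edges with
        | nil => exact absurd hE hne
        | cons a s => exact ⟨a, rfl⟩
      have r1 := p1.1.2.hv x (Option.mem_def.mpr hx)
      have r2 := p2.1.2.hv x (Option.mem_def.mpr (hedges ▸ hx))
      have hvtx : p1.1.2.vtx = p2.1.2.vtx := r1.symm.trans r2
      exact congrArg Sum.inr (Subtype.ext (Prod.ext hmu (FinPath.ext' hvtx hedges)))

lemma flatMap_seg_inj (hdisj : DisjointPaths M) :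
    ∀ {l1 l2 : List (Collapsed F M).E},
    l1.flatMap (segEdges M) = l2.flatMap (segEdges M) → l1 = l2 := by
  intro l1
  induction l1 with
  | nil =>
    intro l2 h
    cases l2 with
    | nil => rfl
    | cons g l =>
      exfalso
      rw [List.flatMap_nil, List.flatMap_cons] at h
      cases hE : segEdges M g with
      | nil => exact segEdges_ne_nil g hE
      | cons a s => rw [hE] at h; simp at h
  | cons g1 l1 ih =>
    intro l2 h
    cases l2 with
    | nil =>
      exfalso
      rw [List.flatMap_nil, List.flatMap_cons] at h
      cases hE : segEdges M g1 with
      | nil => exact segEdges_ne_nil g1 hE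
      | cons a s => rw [hE] at h; simp at h
    | cons g2 l2 =>
      rw [List.flatMap_cons, List.flatMap_cons] at h
      have hg : g1 = g2 := seg_cancel hdisj h
      subst hg
      rw [ih (List.append_cancel_left h)]

lemma exists_decomp (hM : ∀ mu ∈ M, Collapsible mu) (hdisj : DisjointPaths M) :
    ∀ (n : ℕ) (l : List F.E) (v : F.V), l.length ≤ n →
    l.Chain' (fun e f => F.s e = F.r f) →
    (∀ e ∈ l.head?, F.r e = v) →
    v ∉ sInfSet M →
    (l.getLast?).elim v F.s ∉ sInfSet M →
    ∃ gl : List (Collapsed F M).E,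
      gl.flatMap (segEdges M) = l ∧
      gl.Chain' (fun g g' => (Collapsed F M).s g = (Collapsed F M).r g') ∧
      ∀ g ∈ gl.head?, ((Collapsed F M).r g).1 = v := by
  intro n
  induction n with
  | zero =>
    intro l v hlen _ _ _ _
    have hl : l = [] := List.length_eq_zero_iff.mp (Nat.le_zero.mp hlen)
    subst hl
    exact ⟨[], by simp, List.isChain_nil, by simp⟩
  | succ n ih =>
    intro l v hlen hc hhd hv hs
    cases hlcase : l with
    | nil => exact ⟨[], by simp, List.isChain_nil, by simp⟩
    | cons e rest =>
      subst hlcase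
      have hre : F.r e = v := hhd e rfl
      by_cases hk : e ∈ Kept M
      · -- kept edge case
        have hse : F.s e ∉ sInfSet M := kept_source hM hk
        have hrest : ∀ f ∈ rest.head?, F.r f = F.s e :=
          fun f hf => ((List.isChain_cons.mp hc).1 f hf).symm
        have hs' : rest.getLast?.elim (F.s e) F.s ∉ sInfSet M := by
          cases rest with
          | nil => simpa using hse
          | cons f r =>
            obtain ⟨x, hx⟩ : ∃ x, (f :: r).getLast? = some x :=
              ⟨_, List.getLast?_eq_getLast (List.cons_ne_nil f r)⟩
            rw [List.getLast?_cons_cons, hx] at hs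
            rw [hx]
            exact hs
        obtain ⟨gl, hfl, hch, hhd'⟩ := ih rest (F.s e)
          (by simp only [List.length_cons] at hlen; omega)
          (List.isChain_cons.mp hc).2 hrest hse hs'
        refine ⟨Sum.inl ⟨e, hk, hse⟩ :: gl, ?_, ?_, ?_⟩
        · refine (congrArg (e :: ·) hfl).trans ?_
          rfl
        · refine List.isChain_cons.mpr ?_
          exact ⟨fun g' hg' => Subtype.ext (hhd' g' hg').symm, hch⟩
        · intro g hg
          have hg' : Sum.inl ⟨e, hk, hse⟩ = g := Option.mem_some_iff.mp hg
          subst hg'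
          exact hre
      · -- first edge starts a collapsed path
        have hmu : ∃ mu ∈ M, e = mu.edge 0 := by
          by_contra hcon
          push_neg at hcon
          exact hk ⟨by rw [hre]; exact hv, fun mu hm => hcon mu hm⟩
        obtain ⟨mu, hm, he0⟩ := hmu
        set l : List F.E := e :: rest with hl
        classical
        have hexists : ∃ i, i < l.length ∧ l[i]? ≠ some (mu.edge i) := by
          by_contra hcon
          push_neg at hcon
          have hlast : l.getLast? = some (mu.edge (l.length - 1)) := by
            rw [List.getLast?_eq_getElem?]
            exact hcon (l.length - 1) (by simp [hl])
          rw [hlast] at hs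
          exact hs (s_mem_sInf hm _)
        obtain ⟨k, hklt, hkne, hmin⟩ : ∃ k, k < l.length ∧
            l[k]? ≠ some (mu.edge k) ∧ ∀ j, j < k → l[j]? = some (mu.edge j) := by
          refine ⟨Nat.find hexists, (Nat.find_spec hexists).1,
            (Nat.find_spec hexists).2, ?_⟩
          intro j hj
          have hj' := Nat.find_min hexists hj
          push_neg at hj'
          exact hj' (lt_trans hj (Nat.find_spec hexists).1)
        have hk0 : 0 < k := by
          rcases Nat.eq_zero_or_pos k with h0 | h0
          · exfalso
            rw [h0] at hkne
            apply hkne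
            show l[0]? = some (mu.edge 0)
            rw [hl, List.getElem?_cons_zero, he0]
          · exact h0
        have hchain' : ∀ i, (h : i + 1 < l.length) →
            F.s (l[i]'(by omega)) = F.r (l[i+1]'h) := by
          intro i hi
          have hcg := List.isChain_iff_getElem.mp hc i (by omega)
          simpa [List.get_eq_getElem] using hcg
        have hchain2 : ∀ i j (hj : j < l.length) (hij : i + 1 = j),
            F.s (l[i]'(by omega)) = F.r (l[j]'hj) := by
          intro i j hj hij
          subst hij
          exact hchain' i hj
        have hrk : F.r (l[k]'hklt) = F.r (mu.edge k) := by
          have h1 := hchain2 (k-1) k hklt (by omega)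
          have e1 : l[k-1]'(by omega) = mu.edge (k-1) := by
            have hm1 := hmin (k-1) (by omega)
            rw [List.getElem?_eq_getElem (by omega : k - 1 < l.length)] at hm1
            exact Option.some_injective _ hm1
          rw [e1] at h1
          have h2 : F.s (mu.edge (k-1)) = F.r (mu.edge k) := by
            have h3 := mu.chain (k-1)
            rwa [show k - 1 + 1 = k from by omega] at h3
          rw [← h1]
          exact h2
        have hne_k : l[k]'hklt ≠ mu.edge k := by
          intro hh
          apply hkne
          rw [List.getElem?_eq_getElem hklt, hh]
        have hsrc : F.s (l[k]'hklt) ∉ sInfSet M := by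
          rintro ⟨mu', hm', j, hj⟩
          have heq : l[k]'hklt = mu'.edge j := (hM mu' hm').1 _ j hj
          have hr' : F.r (mu'.edge j) = F.r (mu.edge k) := by rw [← heq]; exact hrk
          have hmm : mu' = mu := by
            by_contra hne
            exact (hdisj mu' hm' mu hm hne).2 j k hr'
          subst hmm
          have hjk : j = k := range_inj (hM mu' hm') hr'
          subst hjk
          exact hne_k heq
        have htake_len : (l.take (k+1)).length = k + 1 := by
          rw [List.length_take]
          omega
        have htake_chain : (l.take (k+1)).Chain' fun e f => F.s e = F.r f :=
          hc.prefix (List.take_prefix _ _)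
        have htake_hv : ∀ f ∈ (l.take (k+1)).head?, F.r f = v := by
          intro f hf
          apply hhd
          rw [hl] at hf ⊢
          rw [List.take_succ_cons] at hf
          exact hf
        obtain ⟨nu, hnuvtx, hnuedges⟩ :
            ∃ nu : FinPath F, nu.vtx = v ∧ nu.edges = l.take (k+1) :=
          ⟨⟨v, l.take (k+1), htake_chain, htake_hv⟩, rfl, rfl⟩
        have hnucand : nu ∈ CollCand mu := by
          refine ⟨?_, ?_, ?_⟩
          · rw [hnuedges, htake_len]; omega
          · intro i hi
            rw [hnuedges, htake_len] at hi
            rw [hnuedges, List.getElem?_take, if_pos (by omega)]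
            exact hmin i (by omega)
          · rw [hnuedges, htake_len]
            simp only [Nat.add_sub_cancel]
            rw [List.getElem?_take, if_pos (by omega),
              List.getElem?_eq_getElem hklt]
            intro hh
            exact hne_k (Option.some_injective _ hh)
        have hnusrc : nu.source = F.s (l[k]'hklt) := by
          apply source_eq_of_getLast
          rw [hnuedges, List.getLast?_eq_getElem?, htake_len]
          simp only [Nat.add_sub_cancel]
          rw [List.getElem?_take, if_pos (by omega)]
          exact List.getElem?_eq_getElem hklt
        have hdrop_hd : ∀ f ∈ (l.drop (k+1)).head?, F.r f = F.s (l[k]'hklt) := by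
          intro f hf
          rw [List.head?_drop] at hf
          have hk1 : k + 1 < l.length := by
            by_contra hge
            rw [List.getElem?_eq_none (by omega)] at hf
            exact Option.not_mem_none f hf
          rw [List.getElem?_eq_getElem hk1] at hf
          have hf' : l[k+1]'hk1 = f := Option.mem_some_iff.mp hf
          subst hf'
          exact (hchain' k hk1).symm
        have hdrop_last :
            ((l.drop (k+1)).getLast?).elim (F.s (l[k]'hklt)) F.s ∉ sInfSet M := by
          rcases Nat.lt_or_ge (k+1) l.length with hlt | hge
          · obtain ⟨x, hx⟩ : ∃ x, l.getLast? = some x :=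
              ⟨_, List.getLast?_eq_getLast (l := l) (by rw [hl]; exact List.cons_ne_nil _ _)⟩
            have hgl : (l.drop (k+1)).getLast? = some x := by
              rw [List.getLast?_eq_getElem?, List.length_drop, List.getElem?_drop,
                show k + 1 + (l.length - (k+1) - 1) = l.length - 1 by omega,
                ← List.getLast?_eq_getElem?]
              exact hx
            rw [hgl]
            rw [hx] at hs
            simpa using hs
          · have hdn : l.drop (k+1) = [] := List.drop_eq_nil_of_le hge
            rw [hdn]
            simpa using hsrc
        obtain ⟨gl, hfl, hch, hhd2⟩ := ih (l.drop (k+1)) (F.s (l[k]'hklt))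
          (by rw [List.length_drop]; omega)
          (hc.drop (k+1)) hdrop_hd hsrc hdrop_last
        refine ⟨Sum.inr ⟨(mu, nu), hm, hnucand, by rw [hnuvtx]; exact hv,
          by rw [hnusrc]; exact hsrc⟩ :: gl, ?_, ?_, ?_⟩
        · refine (congrArg (nu.edges ++ ·) hfl).trans ?_
          show nu.edges ++ l.drop (k+1) = l
          rw [hnuedges]
          exact List.take_append_drop (k+1) l
        · refine List.isChain_cons.mpr ?_
          refine ⟨?_, hch⟩
          intro g' hg'
          apply Subtype.ext
          show nu.source = ((Collapsed F M).r g').1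
          rw [hnusrc]
          exact (hhd2 g' hg').symm
        · intro g hg
          have hg' := Option.mem_some_iff.mp hg
          subst hg'
          show nu.vtx = v
          exact hnuvtx

end Desing

end DirectedGraph

open DirectedGraph in
/-- for a Drinen-Tomforde desingularisation (F, M) of E = F_M, the map
phi : E⁰F*E⁰ → E* determined by concatenating the segment images is a bijection
preserving range and source. -/
theorem phi_bijective (F : DirectedGraph) (M : Set (InfPath F))
    (hrf : ∀ v : F.V, (F.r ⁻¹' {v}).Finite)
    (hns : ∀ v : F.V, (F.r ⁻¹' {v}).Nonempty)
    (hM : ∀ mu ∈ M, Collapsible mu) (hdisj : DisjointPaths M) :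
    ∃ phi : {beta : FinPath F //
        beta.range ∉ sInfSet M ∧ beta.source ∉ sInfSet M} → FinPath (Collapsed F M),
      (∀ (beta : {beta : FinPath F //
            beta.range ∉ sInfSet M ∧ beta.source ∉ sInfSet M})
          (gam : FinPath (Collapsed F M)),
          beta.1.edges = gam.edges.flatMap (segEdges M) →
          beta.1.vtx = collV M gam.vtx → phi beta = gam) ∧
      Function.Bijective phi ∧
      (∀ beta, collV M (phi beta).range = beta.1.range ∧
        collV M (phi beta).source = beta.1.source) := by
  classical
  have hsub : ∀ gam : FinPath (Collapsed F M),
      (psiF gam).range ∉ sInfSet M ∧ (psiF gam).source ∉ sInfSet M := by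
    intro gam
    constructor
    · exact gam.vtx.2
    · rw [psiF_source]
      exact (gam.source).2
  set psiS : FinPath (Collapsed F M) →
      {beta : FinPath F // beta.range ∉ sInfSet M ∧ beta.source ∉ sInfSet M} :=
    fun gam => ⟨psiF gam, hsub gam⟩ with hpsiS
  have hinj : Function.Injective psiS := by
    intro g1 g2 h
    have h' : psiF g1 = psiF g2 := congrArg Subtype.val h
    apply FinPath.ext'
    · exact Subtype.ext (congrArg FinPath.vtx h')
    · exact flatMap_seg_inj hdisj (congrArg FinPath.edges h')
  have hsurj : Function.Surjective psiS := by
    rintro ⟨beta, hr, hsb⟩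
    obtain ⟨gl, hfl, hch, hhd⟩ := exists_decomp hM hdisj beta.edges.length
      beta.edges beta.vtx le_rfl beta.chain beta.hv hr hsb
    refine ⟨⟨⟨beta.vtx, hr⟩, gl, hch, fun g hg => Subtype.ext (hhd g hg)⟩, ?_⟩
    apply Subtype.ext
    apply FinPath.ext'
    · rfl
    · exact hfl
  let E := Equiv.ofBijective psiS ⟨hinj, hsurj⟩
  refine ⟨E.symm, ?_, E.symm.bijective, ?_⟩
  · intro beta gam h1 h2
    have hps : psiS gam = beta := by
      apply Subtype.ext
      apply FinPath.ext'
      · exact h2.symm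
      · exact h1.symm
    rw [← hps]
    exact E.symm_apply_apply gam
  · intro beta
    have hback : psiS (E.symm beta) = beta := E.apply_symm_apply beta
    have hb : beta.1 = psiF (E.symm beta) := (congrArg Subtype.val hback).symm
    constructor
    · rw [hb]
      rfl
    · rw [hb, psiF_source]
      rfl
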